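/- arXiv:2001.10233 — 4 statements merged into one kernel-verified Lean document; each statement's English description precedes it below -/
import Mathlib

section
/- Let G be a groupoid. There is a functor ρ from the product groupoid Bℤ × ΛG to the inertia groupoid ΛG which is the identity on objects and sends a morphism (k, g), where k ∈ ℤ and g : (x, a) ⟶ (y, b) is a morphism of ΛG, to aᵏ ≫ g : (x, a) ⟶ (y, b). In particular ρ(0, 𝟙) = 𝟙 and ρ(k + l, g ≫ h) = ρ(k, g) ≫ ρ(l, h) for all composable morphisms g, h of ΛG and all k, l ∈ ℤ. -/
open CategoryTheory

universe v u

/-- The one-object groupoid `Bℤ` with endomorphism group the integers. -/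
abbrev BZ : Type := SingleObj (Multiplicative ℤ)

/-- Objects of the inertia groupoid `ΛG`: pairs `(x, a)` with `a : x ⟶ x` a loop of `G`. -/
structure Inertia (G : Type u) [Groupoid.{v, u} G] : Type (max u v) where
  pt : G
  loop : pt ⟶ pt

/-- The inertia groupoid: morphisms `(x, a) ⟶ (y, b)` are morphisms `g : x ⟶ y`
of `G` satisfying `a ≫ g = g ≫ b`; composition and identities are those of `G`. -/
instance Inertia.category (G : Type u) [Groupoid.{v, u} G] : Category (Inertia G) where
  Hom A B := { g : A.pt ⟶ B.pt // A.loop ≫ g = g ≫ B.loop }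
  id A := ⟨𝟙 A.pt, by simp⟩
  comp {A B C} f g := ⟨f.1 ≫ g.1, by
    rw [← Category.assoc, f.2, Category.assoc, g.2, ← Category.assoc]⟩
  id_comp f := by apply Subtype.ext; simp
  comp_id f := by apply Subtype.ext; simp
  assoc f g h := by apply Subtype.ext; simp

lemma zpow_comm_comp {G : Type u} [Groupoid.{v, u} G] {x y : G}
    {a : x ⟶ x} {b : y ⟶ y} {g : x ⟶ y} (h : a ≫ g = g ≫ b) (n : ℤ) :
    (a ^ n) ≫ g = g ≫ (b ^ n) := by
  have hinv : Groupoid.inv a ≫ g = g ≫ Groupoid.inv b := by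
    rw [Groupoid.inv_eq_inv, Groupoid.inv_eq_inv, IsIso.inv_comp_eq, ← Category.assoc, h]
    simp
  induction n using Int.induction_on with
  | zero => simp
  | succ n ih =>
      calc (a ^ ((n : ℤ) + 1)) ≫ g = ((a ^ (n : ℤ)) ≫ a) ≫ g := by
              rw [zpow_add_one, Groupoid.vertexGroup_mul]
        _ = (a ^ (n : ℤ)) ≫ g ≫ b := by rw [Category.assoc, h]
        _ = (g ≫ (b ^ (n : ℤ))) ≫ b := by rw [← Category.assoc, ih]
        _ = g ≫ (b ^ ((n : ℤ) + 1)) := by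
              rw [zpow_add_one, Groupoid.vertexGroup_mul, Category.assoc]
  | pred n ih =>
      calc (a ^ (-(n : ℤ) - 1)) ≫ g = ((a ^ (-(n : ℤ))) ≫ Groupoid.inv a) ≫ g := by
              rw [zpow_sub_one, Groupoid.vertexGroup_mul, Groupoid.vertexGroup_inv]
        _ = (a ^ (-(n : ℤ))) ≫ g ≫ Groupoid.inv b := by rw [Category.assoc, hinv]
        _ = (g ≫ (b ^ (-(n : ℤ)))) ≫ Groupoid.inv b := by rw [← Category.assoc, ih]
        _ = g ≫ (b ^ (-(n : ℤ) - 1)) := by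
              rw [zpow_sub_one, Groupoid.vertexGroup_mul, Groupoid.vertexGroup_inv,
                Category.assoc]

lemma zpow_loop_comm {G : Type u} [Groupoid.{v, u} G] {x : G} (a : x ⟶ x) (n : ℤ) :
    a ≫ (a ^ n) = (a ^ n) ≫ a :=
  (zpow_comm_comp rfl n).symm

/-- The rotation functor. -/
def rho (G : Type u) [Groupoid.{v, u} G] : BZ × Inertia G ⥤ Inertia G where
  obj X := X.2
  map {X Y} f := ⟨(X.2.loop ^ Multiplicative.toAdd (f.1 : Multiplicative ℤ)) ≫ f.2.1, by
    rw [← Category.assoc, zpow_loop_comm, Category.assoc, f.2.2, ← Category.assoc]⟩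
  map_id X := by
    apply Subtype.ext
    show (X.2.loop ^ (Multiplicative.toAdd (1 : Multiplicative ℤ))) ≫ 𝟙 X.2.pt = 𝟙 X.2.pt
    simp
  map_comp {X Y Z} f g := by
    apply Subtype.ext
    show (X.2.loop ^
        Multiplicative.toAdd (((f.1 : X.1 ⟶ Y.1) ≫ (g.1 : Y.1 ⟶ Z.1)) : Multiplicative ℤ)) ≫
        (f.2.1 ≫ g.2.1) =
      ((X.2.loop ^ Multiplicative.toAdd (f.1 : Multiplicative ℤ)) ≫ f.2.1) ≫
        ((Y.2.loop ^ Multiplicative.toAdd (g.1 : Multiplicative ℤ)) ≫ g.2.1)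
    rw [SingleObj.comp_as_mul, toAdd_mul, add_comm, zpow_add, Groupoid.vertexGroup_mul,
      Category.assoc, Category.assoc, ← Category.assoc f.2.1, ← zpow_comm_comp f.2.2,
      Category.assoc]

/-- There is a functor `ρ` from the product groupoid `Bℤ × ΛG` to the inertia groupoid
`ΛG` which is the identity on objects and sends a morphism `(k, g)`, with `k ∈ ℤ` and
`g : (x, a) ⟶ (y, b)` a morphism of `ΛG`, to `aᵏ ≫ g : (x, a) ⟶ (y, b)`; in particular
`ρ(0, 𝟙) = 𝟙` and `ρ(k + l, g ≫ h) = ρ(k, g) ≫ ρ(l, h)`. -/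
theorem stmt4 {G : Type u} [Groupoid.{v, u} G] :
    ∃ ρ : BZ × Inertia G ⥤ Inertia G,
    ∃ hobj : ∀ X : BZ × Inertia G, ρ.obj X = X.2,
      (∀ (A B : Inertia G) (k : Multiplicative ℤ) (g : A ⟶ B),
        (ρ.map ((k, g) :
            (SingleObj.star (Multiplicative ℤ), A) ⟶
            (SingleObj.star (Multiplicative ℤ), B))).1 =
          eqToHom (congrArg Inertia.pt (hobj (SingleObj.star (Multiplicative ℤ), A))) ≫
            ((A.loop ^ Multiplicative.toAdd k) ≫ g.1) ≫
            eqToHom (congrArg Inertia.pt (hobj (SingleObj.star (Multiplicative ℤ), B))).symm) ∧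
      (∀ A : Inertia G,
        ρ.map (𝟙 (SingleObj.star (Multiplicative ℤ), A)) =
          𝟙 (ρ.obj (SingleObj.star (Multiplicative ℤ), A))) ∧
      (∀ (A B C : Inertia G) (k l : ℤ) (g : A ⟶ B) (h : B ⟶ C),
        ρ.map ((Multiplicative.ofAdd (k + l), g ≫ h) :
            (SingleObj.star (Multiplicative ℤ), A) ⟶
            (SingleObj.star (Multiplicative ℤ), C)) =
          ρ.map ((Multiplicative.ofAdd k, g) :
            (SingleObj.star (Multiplicative ℤ), A) ⟶
            (SingleObj.star (Multiplicative ℤ), B)) ≫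
          ρ.map ((Multiplicative.ofAdd l, h) :
            (SingleObj.star (Multiplicative ℤ), B) ⟶
            (SingleObj.star (Multiplicative ℤ), C))) := by
  refine ⟨rho G, fun _ => rfl, ?_, ?_, ?_⟩
  · intro A B k g
    simp [rho]
    exact (Category.id_comp _).symm
  · intro A
    exact (rho G).map_id _
  · intro A B C k l g h
    have heq : ((Multiplicative.ofAdd (k + l), g ≫ h) :
        (SingleObj.star (Multiplicative ℤ), A) ⟶
        (SingleObj.star (Multiplicative ℤ), C)) =
        (((Multiplicative.ofAdd k, g) :
            (SingleObj.star (Multiplicative ℤ), A) ⟶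
            (SingleObj.star (Multiplicative ℤ), B)) ≫
          ((Multiplicative.ofAdd l, h) :
            (SingleObj.star (Multiplicative ℤ), B) ⟶
            (SingleObj.star (Multiplicative ℤ), C)) :
          (SingleObj.star (Multiplicative ℤ), A) ⟶
          (SingleObj.star (Multiplicative ℤ), C)) := by
      rw [prod_comp, SingleObj.comp_as_mul, ← ofAdd_add, add_comm]
    rw [heq, Functor.map_comp]
end

section
/- Let N and G be groups, let G act on N by group automorphisms, and let φ : N → G be a group homomorphism satisfying φ(g • x) = g * φ(x) * g⁻¹ for all g ∈ G, x ∈ N, and φ(y) • x = y * x * y⁻¹ for all x, y ∈ N. Let N ⋊ G be the transformation groupoid of the associated right action x^g := g⁻¹ • x of G on the set N: its objects are the elements of N, its morphisms are pairs (x, g) : x ⟶ g⁻¹ • x with x ∈ N, g ∈ G, and composition is (x, g) ≫ (g⁻¹ • x, h) = (x, g*h). Then the assignment which is the identity on objects and sends a morphism (k, (x, g)) of the product groupoid Bℤ × (N ⋊ G) to the morphism (x, φ(x)ᵏ * g) of N ⋊ G is a functor; in particular (x, φ(x)ᵏ * g) is again a morphism x ⟶ g⁻¹ • x, and the assignment respects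 composition and identities. -/
open CategoryTheory

/-- The transformation groupoid (crossed product groupoid) `N ⋊ G` of the right action
`x ^ g := g⁻¹ • x` of `G` on the set `N`: its objects are the elements of `N`. -/
structure TransGpd (G N : Type*) [Group G] [Group N] [MulDistribMulAction G N] where
  pt : N

/-- Morphisms of `N ⋊ G` are pairs `(x, g) : x ⟶ g⁻¹ • x` (encoded as
`{g : G // g⁻¹ • x = y}`), and composition is `(x, g) ≫ (g⁻¹ • x, h) = (x, g * h)`. -/
instance TransGpd.category (G N : Type*) [Group G] [Group N] [MulDistribMulAction G N] :
    Category (TransGpd G N) where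
  Hom x y := { g : G // g⁻¹ • x.pt = y.pt }
  id x := ⟨1, by simp⟩
  comp {x y z} f g := ⟨f.1 * g.1, by rw [mul_inv_rev, mul_smul, f.2, g.2]⟩
  id_comp f := by apply Subtype.ext; simp
  comp_id f := by apply Subtype.ext; simp
  assoc f g h := by apply Subtype.ext; simp [mul_assoc]

/-- Let `G` act on the group `N` by automorphisms and let `φ : N →* G` satisfy the
equivariance and Peiffer conditions.  Then the assignment which is the identity on
objects and sends a morphism `(k, (x, g))` of `Bℤ × (N ⋊ G)` to `(x, φ(x)ᵏ * g)` is a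
functor `Bℤ × (N ⋊ G) ⥤ N ⋊ G`; in particular `(x, φ(x)ᵏ * g)` is again a morphism
`x ⟶ g⁻¹ • x`. -/
theorem stmt7 {N G : Type*} [Group N] [Group G] [MulDistribMulAction G N]
    (φ : N →* G) (hφ : ∀ (g : G) (x : N), φ (g • x) = g * φ x * g⁻¹)
    (hpeiffer : ∀ x y : N, φ y • x = y * x * y⁻¹) :
    (∀ (x : N) (g : G) (k : ℤ), (φ x ^ k * g)⁻¹ • x = g⁻¹ • x) ∧
    ∃ ρ : BZ × TransGpd G N ⥤ TransGpd G N,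
      (∀ X : BZ × TransGpd G N, ρ.obj X = X.2) ∧
      (∀ (x y : TransGpd G N) (k : Multiplicative ℤ) (f : x ⟶ y),
        (ρ.map ((k, f) :
            (SingleObj.star (Multiplicative ℤ), x) ⟶
            (SingleObj.star (Multiplicative ℤ), y))).1 =
          φ x.pt ^ Multiplicative.toAdd k * f.1) := by
  have hfix : ∀ (x : N) (k : ℤ), (φ x ^ k) • x = x := by
    intro x k
    have h1 : φ x ∈ MulAction.stabilizer G x := by
      simp [MulAction.mem_stabilizer_iff, hpeiffer]
    exact zpow_mem h1 k
  have hmain : ∀ (x : N) (g : G) (k : ℤ), (φ x ^ k * g)⁻¹ • x = g⁻¹ • x := by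
    intro x g k
    rw [mul_inv_rev, mul_smul, ← zpow_neg, hfix]
  have hconj : ∀ (x y : TransGpd G N) (f : x ⟶ y) (k : ℤ),
      φ y.pt ^ k = f.1⁻¹ * φ x.pt ^ k * f.1 := by
    intro x y f k
    have h1 := hφ f.1⁻¹ x.pt
    rw [f.2, inv_inv] at h1
    rw [h1]
    rw [show f.1⁻¹ * φ x.pt * f.1 = f.1⁻¹ * φ x.pt * (f.1⁻¹)⁻¹ from by rw [inv_inv],
      conj_zpow, inv_inv]
  refine ⟨hmain, ⟨{
    obj := fun X => X.2
    map := fun {X Y} f => ⟨φ X.2.pt ^ Multiplicative.toAdd f.1 * f.2.1, by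
      rw [hmain]; exact f.2.2⟩
    map_id := fun X => by
      apply Subtype.ext
      dsimp
      rw [SingleObj.id_as_one]
      show φ X.2.pt ^ Multiplicative.toAdd (1 : Multiplicative ℤ) * (1 : G) = (1 : G)
      simp
    map_comp := fun {X Y Z} f g => by
      apply Subtype.ext
      dsimp
      rw [SingleObj.comp_as_mul, toAdd_mul, zpow_add]
      show φ X.2.pt ^ Multiplicative.toAdd g.1 * φ X.2.pt ^ Multiplicative.toAdd f.1 *
          (f.2.1 * g.2.1) =
        (φ X.2.pt ^ Multiplicative.toAdd f.1 * f.2.1) *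
        (φ Y.2.pt ^ Multiplicative.toAdd g.1 * g.2.1)
      rw [hconj X.2 Y.2 f.2 (Multiplicative.toAdd g.1)]
      group }, fun X => rfl, fun x y k f => rfl⟩⟩
end

section
/- Let (N, G, φ, A) be a crossed module of groupoids, N ⋊ G its crossed product groupoid, π : N ⋊ G → G the projection functor sending the object (x, n) to x and a morphism g : (x, n) ⟶ (y, m) to g : x ⟶ y, and ρ : Bℤ × (N ⋊ G) → N ⋊ G the functor which is the identity on objects and sends (k, g : (x, n) ⟶ (y, m)) to φ_x(nᵏ) ≫ g. Fix p ≥ 1 and 1 ≤ i ≤ p, and let ι : N⋊G_{p−1} → ℤ × N⋊G_{p−1} be the map c ↦ (1, c), and let φᵢ : ℤ × N⋊G_{p−1} → (Bℤ × (N ⋊ G))_p be the map sending (k, (n, g₁, …, g_{p−1})) to the composable p-tuple of the product groupoid Bℤ × (N ⋊ G) whose ℤ-components are (0, …, 0, k, 0, …, 0) with k in position i, and whose (N ⋊ G)-components form the chain obtained from the chain corresponding to (n, g₁, …, g_{p−1}) by inserting the identity morphism at the i-th vertex. Then the composite N⋊G_{p−1} →ι ℤ × N⋊G_{p−1} →φᵢ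 (Bℤ × (N ⋊ G))_p → (N ⋊ G)_p → G_p, where the last two maps are induced by ρ and π on composable tuples, sends (n, g₁, …, g_{p−1}) to (g₁, …, g_{i−1}, φ_{x_{i−1}}(A(g₁ ≫ ⋯ ≫ g_{i−1}) n), g_i, …, g_{p−1}), i.e. it equals the Tu–Xu map f̃_{i−1}. -/
open CategoryTheory

universe v u w

structure CrossedModuleGpd (G : Type u) [Groupoid.{v, u} G]
    (N : G → Type w) [∀ x, Group (N x)] where
  φ : ∀ x : G, N x →* (x ⟶ x)
  A : ∀ {x y : G}, (x ⟶ y) → (N x ≃* N y)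
  A_id : ∀ x : G, A (𝟙 x) = MulEquiv.refl (N x)
  A_comp : ∀ {x y z : G} (g : x ⟶ y) (h : y ⟶ z), A (g ≫ h) = (A g).trans (A h)
  equivariance : ∀ {x y : G} (g : x ⟶ y) (n : N x),
    φ y (A g n) = Groupoid.inv g ≫ φ x n ≫ g
  peiffer : ∀ {x : G} (m n : N x), A (φ x m) n = m⁻¹ * n * m

variable {G : Type u} [Groupoid.{v, u} G] {N : G → Type w} [∀ x, Group (N x)]

def CrossedProd (_C : CrossedModuleGpd G N) : Type (max u w) := Σ x : G, N x

instance CrossedProd.category (C : CrossedModuleGpd G N) : Category (CrossedProd C) where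
  Hom a b := { g : a.1 ⟶ b.1 // C.A g a.2 = b.2 }
  id a := ⟨𝟙 a.1, by rw [C.A_id]; rfl⟩
  comp {a b c} f g := ⟨f.1 ≫ g.1, by rw [C.A_comp]; simp [f.2, g.2]⟩
  id_comp f := by apply Subtype.ext; simp
  comp_id f := by apply Subtype.ext; simp
  assoc f g h := by apply Subtype.ext; simp

/-- The projection functor `π : N ⋊ G ⥤ G`. -/
def crossedProj (C : CrossedModuleGpd G N) : CrossedProd C ⥤ G where
  obj a := a.1
  map f := f.1
  map_id _ := rfl
  map_comp _ _ := rfl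

/-- The natural groupoid homomorphism `ρ : Bℤ × (N ⋊ G) ⥤ N ⋊ G`: the identity on
objects, sending a morphism `(k, g : (x,n) ⟶ (y,m))` to `φ_x(nᵏ) ≫ g`. -/
def crossedRho (C : CrossedModuleGpd G N) : BZ × CrossedProd C ⥤ CrossedProd C where
  obj X := X.2
  map {X Y} f := ⟨C.φ X.2.1 (X.2.2 ^ Multiplicative.toAdd f.1) ≫ f.2.1, by
    rw [C.A_comp]
    show C.A f.2.1 (C.A (C.φ X.2.1 (X.2.2 ^ Multiplicative.toAdd f.1)) X.2.2) = Y.2.2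
    rw [C.peiffer]
    have : (X.2.2 ^ Multiplicative.toAdd f.1)⁻¹ * X.2.2 *
        (X.2.2 ^ Multiplicative.toAdd f.1) = X.2.2 := by group
    rw [this, f.2.2]⟩
  map_id X := by
    apply Subtype.ext
    show C.φ X.2.1 (X.2.2 ^ Multiplicative.toAdd (1 : Multiplicative ℤ)) ≫ 𝟙 X.2.1 = 𝟙 X.2.1
    rw [Category.comp_id]
    show C.φ X.2.1 (X.2.2 ^ (0 : ℤ)) = 𝟙 X.2.1
    rw [zpow_zero, map_one]
    rfl
  map_comp {X Y Z} f g := by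
    apply Subtype.ext
    show C.φ X.2.1 (X.2.2 ^ Multiplicative.toAdd (α := ℤ) (f.1 ≫ g.1)) ≫ (f.2.1 ≫ g.2.1) =
      (C.φ X.2.1 (X.2.2 ^ Multiplicative.toAdd f.1) ≫ f.2.1) ≫
        (C.φ Y.2.1 (Y.2.2 ^ Multiplicative.toAdd g.1) ≫ g.2.1)
    have h1 : C.φ Y.2.1 (Y.2.2 ^ Multiplicative.toAdd g.1) =
        Groupoid.inv f.2.1 ≫ C.φ X.2.1 (X.2.2 ^ Multiplicative.toAdd g.1) ≫ f.2.1 := by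
      have e : Y.2.2 ^ Multiplicative.toAdd g.1 =
          C.A f.2.1 (X.2.2 ^ Multiplicative.toAdd g.1) := by
        rw [map_zpow, f.2.2]
      rw [e, C.equivariance]
    have e2 : Multiplicative.toAdd (α := ℤ) (f.1 ≫ g.1) =
        Multiplicative.toAdd f.1 + Multiplicative.toAdd g.1 :=
      add_comm (Multiplicative.toAdd g.1) (Multiplicative.toAdd f.1)
    have h2 : C.φ X.2.1 (X.2.2 ^ Multiplicative.toAdd (α := ℤ) (f.1 ≫ g.1)) =
        C.φ X.2.1 (X.2.2 ^ Multiplicative.toAdd f.1) ≫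
          C.φ X.2.1 (X.2.2 ^ Multiplicative.toAdd g.1) := by
      show _ = C.φ X.2.1 (X.2.2 ^ Multiplicative.toAdd f.1) *
        C.φ X.2.1 (X.2.2 ^ Multiplicative.toAdd g.1)
      rw [← map_mul, ← zpow_add, e2]
    rw [h1, h2]
    simp only [Category.assoc]
    congr 1
    rw [← Category.assoc f.2.1 (Groupoid.inv f.2.1), Groupoid.comp_inv, Category.id_comp]

/-- A composable `p`-tuple of morphisms in a category `D`: a chain
`x₀ →g₁ x₁ →g₂ ⋯ →g_p x_p`. -/
structure Chain (D : Type u) [Category.{v} D] (p : ℕ) where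
  obj : Fin (p + 1) → D
  map : ∀ i : Fin p, obj i.castSucc ⟶ obj i.succ

namespace Chain

variable {D : Type u} [Category.{v} D]

/-- The initial vertex `x₀` of a chain. -/
def head {p : ℕ} (c : Chain D p) : D := c.obj ⟨0, Nat.succ_pos p⟩

/-- The composite `g₁ ≫ ⋯ ≫ g_k : x₀ ⟶ x_k` of the first `k` morphisms of a chain
(the identity for `k = 0`). -/
def compToAux {p : ℕ} (c : Chain D p) : ∀ (k : ℕ) (h : k < p + 1), (c.head ⟶ c.obj ⟨k, h⟩)
  | 0, _ => 𝟙 c.head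
  | (k + 1), h => c.compToAux k (by omega) ≫ c.map ⟨k, by omega⟩

/-- The composite `g₁ ≫ ⋯ ≫ g_i : x₀ ⟶ x_i` of the first `i` morphisms of a chain. -/
def compTo {p : ℕ} (c : Chain D p) (i : Fin (p + 1)) : c.head ⟶ c.obj i :=
  c.compToAux i.val i.isLt

/-- The underlying `p`-tuple of arrows of a chain. -/
def arrows {p : ℕ} (c : Chain D p) (i : Fin p) : Arrow D := Arrow.mk (c.map i)

/-- The image of a chain under a functor. -/
def mapF {E : Type*} [Category E] (F : D ⥤ E) {p : ℕ} (c : Chain D p) : Chain E p where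
  obj j := F.obj (c.obj j)
  map i := F.map (c.map i)

/-- Insertion of a loop `a : xᵢ ⟶ xᵢ` at the `i`-th vertex of a chain, producing a
composable `(q+1)`-tuple from a composable `q`-tuple. -/
def insert {q : ℕ} (c : Chain D q) (i : Fin (q + 1)) (a : c.obj i ⟶ c.obj i) :
    Chain D (q + 1) where
  obj j := c.obj ⟨if (j : ℕ) ≤ (i : ℕ) then (j : ℕ) else (j : ℕ) - 1, by split <;> omega⟩
  map j :=
    if h : (j : ℕ) < (i : ℕ) then
      eqToHom (congrArg c.obj (Fin.ext (by simp only [Fin.coe_castSucc, Fin.val_succ, Fin.val_mk]; split <;> omega))) ≫ c.map ⟨(j : ℕ), by omega⟩ ≫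
        eqToHom (congrArg c.obj (Fin.ext (by simp only [Fin.coe_castSucc, Fin.val_succ, Fin.val_mk]; split <;> omega)))
    else if h' : (j : ℕ) = (i : ℕ) then
      eqToHom (congrArg c.obj (Fin.ext (by simp only [Fin.coe_castSucc, Fin.val_succ, Fin.val_mk]; split <;> omega))) ≫ a ≫
        eqToHom (congrArg c.obj (Fin.ext (by simp only [Fin.coe_castSucc, Fin.val_succ, Fin.val_mk]; split <;> omega)))
    else
      eqToHom (congrArg c.obj (Fin.ext (by simp only [Fin.coe_castSucc, Fin.val_succ, Fin.val_mk]; split <;> omega))) ≫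
        c.map ⟨(j : ℕ) - 1, by omega⟩ ≫
        eqToHom (congrArg c.obj (Fin.ext (by simp only [Fin.coe_castSucc, Fin.val_succ, Fin.val_mk]; split <;> omega)))

/-- The `j`-th face map of the nerve: drop `g₁` (`j = 0`), compose `gⱼ ≫ g_{j+1}`
(`0 < j < p+1`), or drop `g_{p+1}` (`j = p+1`). -/
def face {p : ℕ} (c : Chain D (p + 1)) (j : Fin (p + 2)) : Chain D p where
  obj m := c.obj ⟨if (m : ℕ) < (j : ℕ) then (m : ℕ) else (m : ℕ) + 1, by split <;> omega⟩
  map m :=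
    if h : (m : ℕ) + 1 < (j : ℕ) then
      eqToHom (congrArg c.obj (Fin.ext (by simp only [Fin.coe_castSucc, Fin.val_succ, Fin.val_mk]; split <;> omega))) ≫ c.map ⟨(m : ℕ), by omega⟩ ≫
        eqToHom (congrArg c.obj (Fin.ext (by simp only [Fin.coe_castSucc, Fin.val_succ, Fin.val_mk]; split <;> omega)))
    else if h' : (m : ℕ) + 1 = (j : ℕ) then
      eqToHom (congrArg c.obj (Fin.ext (by simp only [Fin.coe_castSucc, Fin.val_succ, Fin.val_mk]; split <;> omega))) ≫
        (c.map ⟨(m : ℕ), by omega⟩ ≫ c.map ⟨(m : ℕ) + 1, by omega⟩) ≫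
        eqToHom (congrArg c.obj (Fin.ext (by simp only [Fin.coe_castSucc, Fin.val_succ, Fin.val_mk]; split <;> omega)))
    else
      eqToHom (congrArg c.obj (Fin.ext (by simp only [Fin.coe_castSucc, Fin.val_succ, Fin.val_mk]; split <;> omega))) ≫
        c.map ⟨(m : ℕ) + 1, by omega⟩ ≫
        eqToHom (congrArg c.obj (Fin.ext (by simp only [Fin.coe_castSucc, Fin.val_succ, Fin.val_mk]; split <;> omega)))

end Chain

/-- The simplicial coboundary operator `∂* : C^p → C^{p+1}` on `ℤ`-valued singular
(cochain) functions on composable tuples: `(∂*f)(c) = Σⱼ (−1)ʲ f(ε̄ʲ c)`. -/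
def cobdry (D : Type u) [Category.{v} D] (p : ℕ) (f : Chain D p → ℤ) :
    Chain D (p + 1) → ℤ :=
  fun c => ∑ j : Fin (p + 2), (-1) ^ (j : ℕ) * f (c.face j)

variable {G : Type u} [Groupoid.{v, u} G] {N : G → Type w} [∀ x, Group (N x)]

/-- The identification `N⋊G_q ≅ (N ⋊ G)_q`: the pair `(n, g₁, …, g_q)` corresponds to
the chain of the crossed product groupoid whose `k`-th vertex is `(x_k, A(g₁ ≫ ⋯ ≫ g_k) n)`. -/
def toChain (C : CrossedModuleGpd G N) {q : ℕ} (c : Chain G q) (n : N c.head) :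
    Chain (CrossedProd C) q where
  obj j := ⟨c.obj j, C.A (c.compTo j) n⟩
  map i := ⟨c.map i, by
    show C.A (c.map i) (C.A (c.compTo i.castSucc) n) = C.A (c.compTo i.succ) n
    rw [show c.compTo i.succ = c.compTo i.castSucc ≫ c.map i from rfl, C.A_comp]
    rfl⟩

/-- The chain of `Bℤ` of length `q+1` whose `ℤ`-components are `(0, …, 0, k, 0, …, 0)`
with `k` in position `i`. -/
def zChain (q : ℕ) (k : Multiplicative ℤ) (i : Fin (q + 1)) : Chain BZ (q + 1) where
  obj _ := SingleObj.star (Multiplicative ℤ)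
  map j := if j = i then k else 1

/-- Combining two chains of the same length into a chain of the product category. -/
def prodChain {D : Type*} [Category D] {E : Type*} [Category E] {p : ℕ}
    (c : Chain D p) (d : Chain E p) : Chain (D × E) p where
  obj j := (c.obj j, d.obj j)
  map i := (c.map i, d.map i)

/-- The Tu–Xu map `f̃ᵢ : N⋊G_{p−1} → G_p`,
`f̃ᵢ(n, g₁, …, g_{p−1}) = (g₁, …, gᵢ, φ_{xᵢ}(A(g₁ ≫ ⋯ ≫ gᵢ) n), g_{i+1}, …, g_{p−1})`. -/
def tuXu (C : CrossedModuleGpd G N) {q : ℕ} (i : Fin (q + 1)) (c : Chain G q)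
    (n : N c.head) : Chain G (q + 1) :=
  c.insert i (C.φ (c.obj i) (C.A (c.compTo i) n))

lemma chain_ext {D : Type*} [Category D] {p : ℕ} (P Q : Chain D p)
    (h : P.obj = Q.obj) (h2 : HEq P.map Q.map) : P = Q := by
  rcases P with ⟨po, pm⟩
  rcases Q with ⟨qo, qm⟩
  dsimp at h h2
  subst h
  rw [heq_eq_eq] at h2
  rw [h2]

lemma mapF_insert_map {D : Type*} [Category D] {E : Type*} [Category E] (F : D ⥤ E)
    {q : ℕ} (c : Chain D q) (i : Fin (q + 1)) (a : c.obj i ⟶ c.obj i) (j : Fin (q + 1)) :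
    F.map ((c.insert i a).map j) = ((c.mapF F).insert i (F.map a)).map j := by
  dsimp only [Chain.insert, Chain.mapF]
  by_cases h : (j : ℕ) < (i : ℕ)
  · rw [dif_pos h, dif_pos h]
    simp [eqToHom_map]
  · by_cases h' : (j : ℕ) = (i : ℕ)
    · rw [dif_neg h, dif_neg h, dif_pos h', dif_pos h']
      simp [eqToHom_map]
    · rw [dif_neg h, dif_neg h, dif_neg h', dif_neg h']
      simp [eqToHom_map]

lemma phi_congr (C : CrossedModuleGpd G N) {q : ℕ} (c : Chain G q) (n : N c.head)
    {m m' : Fin (q + 1)} (e : m = m') :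
    C.φ (c.obj m) (C.A (c.compTo m) n) =
      eqToHom (congrArg c.obj e) ≫ C.φ (c.obj m') (C.A (c.compTo m') n) ≫
        eqToHom (congrArg c.obj e.symm) := by
  subst e; simp

set_option maxHeartbeats 1000000 in
/-- The composite of `ι : N⋊G_{p−1} → ℤ × N⋊G_{p−1}, c ↦ (1, c)`, the map
`φᵢ : ℤ × N⋊G_{p−1} → (Bℤ × (N ⋊ G))_p` (inserting `k` in the `i`-th `ℤ`-position and
the identity at the `i`-th vertex of the `(N ⋊ G)`-chain), and the maps induced on
composable tuples by the functors `ρ : Bℤ × (N ⋊ G) ⥤ N ⋊ G` and `π : N ⋊ G ⥤ G`,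
equals the Tu–Xu map `f̃ᵢ`. -/
theorem stmt13 (C : CrossedModuleGpd G N) (q : ℕ) (i : Fin (q + 1))
    (c : Chain G q) (n : N c.head) :
    Chain.mapF (crossedProj C)
      (Chain.mapF (crossedRho C)
        (prodChain (zChain q (Multiplicative.ofAdd 1) i)
          ((toChain C c n).insert i (𝟙 ((toChain C c n).obj i))))) =
    tuXu C i c n := by
  refine chain_ext _ _ rfl ?_
  apply heq_of_eq
  funext j
  change _ ≫ (crossedProj C).map
      (((toChain C c n).insert i (𝟙 ((toChain C c n).obj i))).map j) = _
  rw [mapF_insert_map]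
  change (C.φ (c.obj ⟨if ((j.castSucc : Fin (q+2)) : ℕ) ≤ (i:ℕ) then ((j.castSucc : Fin (q+2)) : ℕ) else ((j.castSucc : Fin (q+2)) : ℕ) - 1, by split <;> omega⟩))
      ((C.A (c.compTo ⟨if ((j.castSucc : Fin (q+2)) : ℕ) ≤ (i:ℕ) then ((j.castSucc : Fin (q+2)) : ℕ) else ((j.castSucc : Fin (q+2)) : ℕ) - 1, by split <;> omega⟩)) n ^
        Multiplicative.toAdd ((zChain q (Multiplicative.ofAdd 1) i).map j)) ≫
    ((c.insert i (𝟙 (c.obj i))).map j) = (tuXu C i c n).map j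
  dsimp only [tuXu, Chain.insert, zChain]
  rcases lt_trichotomy (j:ℕ) (i:ℕ) with h | h | h
  · have hne : j ≠ i := fun e => by rw [e] at h; omega
    rw [dif_pos h, dif_pos h, if_neg hne, toAdd_one, zpow_zero, map_one, End.one_def,
      Category.id_comp]
  · have he : j = i := Fin.ext h
    subst he
    have hnl : ¬ ((j:ℕ) < (j:ℕ)) := lt_irrefl _
    rw [dif_neg hnl, dif_neg hnl, dif_pos rfl, dif_pos rfl, if_pos rfl, toAdd_ofAdd, zpow_one]
    simp only [Fin.coe_castSucc, Fin.val_succ]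
    have hidx : (⟨if (j:ℕ) ≤ (j:ℕ) then (j:ℕ) else (j:ℕ) - 1, by split <;> omega⟩ :
        Fin (q + 1)) = j := Fin.ext (by simp)
    rw [phi_congr C c n hidx]
    simp
  · have hne : j ≠ i := fun e => by rw [e] at h; omega
    have hnl : ¬ ((j:ℕ) < (i:ℕ)) := by omega
    have hne' : ¬ ((j:ℕ) = (i:ℕ)) := by omega
    rw [dif_neg hnl, dif_neg hnl, dif_neg hne', dif_neg hne', if_neg hne, toAdd_one,
      zpow_zero, map_one, End.one_def, Category.id_comp]
end

section
/- Let (N, G, φ, A) be a crossed module of groupoids and N ⋊ G its crossed product groupoid, let π : N ⋊ G → G be the projection functor, ρ : Bℤ × (N ⋊ G) → N ⋊ G the functor ρ(k, g : (x,n) ⟶ (y,m)) = φ_x(nᵏ) ≫ g, ι : N⋊G_{p−1} → ℤ × N⋊G_{p−1} the map c ↦ (1, c), and for 1 ≤ i ≤ p let φᵢ : ℤ × N⋊G_{p−1} → (Bℤ × (N ⋊ G))_p be the map inserting k at the i-th ℤ-position and the identity morphism at the i-th vertex of the (N ⋊ G)-chain. Define Φ := Σ_{i=1}^{p} (−1)^i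 (π ∘ ρ ∘ φᵢ ∘ ι)* : C^p(G) → C^{p−1}(N ⋊ G), where C^p denotes ℤ-valued functions on composable p-tuples. Then Φ = −T₁; that is, for every c : G_p → ℤ one has Φ(c) = − Σ_{i=0}^{p−1} (−1)^i (c ∘ f̃ᵢ). -/
open CategoryTheory

universe v u w

variable {G : Type u} [Groupoid.{v, u} G] {N : G → Type w} [∀ x, Group (N x)]

variable {G : Type u} [Groupoid.{v, u} G] {N : G → Type w} [∀ x, Group (N x)]

theorem Chain.ext' {D : Type*} [Category D] {p : ℕ} {c d : Chain D p}
    (h : c.obj = d.obj)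
    (h' : ∀ i : Fin p, c.map i ≫ eqToHom (congrFun h i.succ) =
      eqToHom (congrFun h i.castSucc) ≫ d.map i) : c = d := by
  cases c; cases d
  cases h
  simp only [eqToHom_refl, Category.comp_id, Category.id_comp] at h'
  congr 1
  funext i
  exact h' i

@[simp] lemma CrossedProd.comp_val {C : CrossedModuleGpd G N} {a b d : CrossedProd C}
    (f : a ⟶ b) (g : b ⟶ d) : (f ≫ g).1 = f.1 ≫ g.1 := rfl

@[simp] lemma CrossedProd.id_val {C : CrossedModuleGpd G N} (a : CrossedProd C) :
    (𝟙 a : a ⟶ a).1 = 𝟙 a.1 := rfl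

@[simp] lemma CrossedProd.eqToHom_val {C : CrossedModuleGpd G N} {a b : CrossedProd C}
    (e : a = b) : (eqToHom e).1 = eqToHom (congrArg Sigma.fst e) := by
  subst e; rfl

lemma aux2 {D : Type*} [Category D] {x y z : D} (e1 : x = y) (e2 : y = z)
    (f : x ⟶ x) (g : y ⟶ y) (hfg : HEq f g) :
    f ≫ eqToHom e1 ≫ 𝟙 y ≫ eqToHom e2 = eqToHom e1 ≫ g ≫ eqToHom e2 := by
  subst e1; subst e2
  simp [eq_of_heq hfg]

set_option maxHeartbeats 8000000 in
theorem stmt15_key (C : CrossedModuleGpd G N) (q : ℕ)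
    (c : Chain G q) (n : N c.head) (i : Fin (q + 1)) :
    Chain.mapF (crossedProj C)
      (Chain.mapF (crossedRho C)
        (prodChain (zChain q (Multiplicative.ofAdd 1) i)
          ((toChain C c n).insert i (𝟙 ((toChain C c n).obj i))))) = tuXu C i c n := by
  refine Chain.ext' rfl fun j => ?_
  show _ ≫ eqToHom rfl = eqToHom rfl ≫ _
  rw [eqToHom_refl, eqToHom_refl, Category.comp_id]
  refine Eq.trans ?_ (Category.id_comp _).symm
  show ((crossedRho C).map (X := (SingleObj.star (Multiplicative ℤ), _))
      (Y := (SingleObj.star (Multiplicative ℤ), _))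
      ((zChain q (Multiplicative.ofAdd 1) i).map j,
      ((toChain C c n).insert i (𝟙 ((toChain C c n).obj i))).map j)).1 =
    (tuXu C i c n).map j
  unfold tuXu Chain.insert crossedRho zChain toChain
  dsimp only
  rcases lt_trichotomy ((j:ℕ)) ((i:ℕ)) with h|h|h
  · have hne : j ≠ i := fun he => by simp [he] at h
    rw [dif_pos h, dif_pos h, if_neg hne]
    rw [toAdd_one, zpow_zero, map_one, Groupoid.vertexGroup_one, Category.id_comp]
    erw [CrossedProd.comp_val, CrossedProd.comp_val, CrossedProd.eqToHom_val, CrossedProd.eqToHom_val]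
  · have he : j = i := Fin.ext h
    subst he
    rw [dif_neg (lt_irrefl ((j:ℕ))), dif_neg (lt_irrefl ((j:ℕ))),
      dif_pos (rfl : (j:ℕ) = (j:ℕ)), dif_pos (rfl : (j:ℕ) = (j:ℕ)), if_pos rfl]
    have hfin : (⟨if ((j.castSucc : Fin (q+2)) : ℕ) ≤ (j : ℕ) then ((j.castSucc : Fin (q+2)) : ℕ)
        else ((j.castSucc : Fin (q+2)) : ℕ) - 1, by split <;> omega⟩ : Fin (q+1)) = j :=
      Fin.ext (by simp)
    have hfin2 : (⟨if ((j.succ : Fin (q+2)) : ℕ) ≤ (j : ℕ) then ((j.succ : Fin (q+2)) : ℕ)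
        else ((j.succ : Fin (q+2)) : ℕ) - 1, by split <;> omega⟩ : Fin (q+1)) = j :=
      Fin.ext (by simp)
    have hheq : ∀ k₁ k₂ : Fin (q+1), k₁ = k₂ →
        HEq (C.φ (c.obj k₁) ((C.A (c.compTo k₁)) n)) (C.φ (c.obj k₂) ((C.A (c.compTo k₂)) n)) := by
      rintro k₁ k₂ rfl; rfl
    rw [show Multiplicative.toAdd (Multiplicative.ofAdd (1:ℤ)) = (1:ℤ) from rfl, zpow_one]
    erw [CrossedProd.comp_val, CrossedProd.comp_val, CrossedProd.id_val, CrossedProd.eqToHom_val, CrossedProd.eqToHom_val]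
    exact aux2 _ _ _ _ (hheq _ _ hfin)
  · have hne : j ≠ i := fun he => by simp [he] at h
    rw [dif_neg (by omega : ¬(j:ℕ) < (i:ℕ)), dif_neg (by omega : ¬(j:ℕ) < (i:ℕ)),
      dif_neg (by omega : ¬(j:ℕ) = (i:ℕ)), dif_neg (by omega : ¬(j:ℕ) = (i:ℕ)), if_neg hne]
    rw [toAdd_one, zpow_zero, map_one, Groupoid.vertexGroup_one, Category.id_comp]
    erw [CrossedProd.comp_val, CrossedProd.comp_val, CrossedProd.eqToHom_val, CrossedProd.eqToHom_val]

/-- The transgression map `Φ = Σᵢ (−1)ⁱ (π ∘ ρ ∘ φᵢ ∘ ι)*` equals `−T₁`: for every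
cochain `f : G_p → ℤ` and every `(n, g₁, …, g_{p−1}) ∈ N⋊G_{p−1}`,
`Φ(f) = − Σᵢ (−1)ⁱ (f ∘ f̃ᵢ)`. -/
theorem stmt15 (C : CrossedModuleGpd G N) (q : ℕ) (f : Chain G (q + 1) → ℤ)
    (c : Chain G q) (n : N c.head) :
    (∑ i : Fin (q + 1), (-1) ^ ((i : ℕ) + 1) *
      f (Chain.mapF (crossedProj C)
          (Chain.mapF (crossedRho C)
            (prodChain (zChain q (Multiplicative.ofAdd 1) i)
              ((toChain C c n).insert i (𝟙 ((toChain C c n).obj i))))))) =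
    - ∑ i : Fin (q + 1), (-1) ^ (i : ℕ) * f (tuXu C i c n) := by
  rw [← Finset.sum_neg_distrib]
  refine Finset.sum_congr rfl fun i _ => ?_
  rw [stmt15_key C q c n i, pow_succ]
  ring
end
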